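/- Let $E$ be a real Hilbert space, $Q \subseteq E$ nonempty closed convex, and let sequences $(z^{t+1})_{t\ge 0} \subseteq Q$, $(g^{t+1})_{t\ge 0} \subseteq E$, $(v^t)_{t\ge 0} \subseteq Q$ satisfy: $v^{t+1} = \operatorname{argmin}_{v\in Q}[a_{t+1}\langle g^{t+1}, v\rangle + \frac12\|v - v^t\|^2]$ with $a_{t+1} = \frac{2\langle g^{t+1}, v^t - z^{t+1}\rangle}{\|g^{t+1}\|^2} \ge 0$ and $g^{t+1} \ne 0$. Then for every $v \in Q$ and every $T \ge 1$: $\sum_{t=0}^{T-1} a_{t+1}\langle g^{t+1}, z^{t+1} - v\rangle \le \frac12\|v^0 - v\|^2 - \frac12\|v^T - v\|^2$. -/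

import Mathlib

theorem stmt_4 {E : Type*} [NormedAddCommGroup E] [InnerProductSpace ℝ E]
    [CompleteSpace E]
    (Q : Set E) (hQne : Q.Nonempty) (hQc : IsClosed Q) (hQconv : Convex ℝ Q)
    (z g : ℕ → E) (v : ℕ → E) (a : ℕ → ℝ)
    (hz : ∀ t, z (t + 1) ∈ Q) (hv : ∀ t, v t ∈ Q)
    (hgne : ∀ t, g (t + 1) ≠ 0)
    (ha : ∀ t, a (t + 1)
      = 2 * (inner ℝ (g (t + 1)) (v t - z (t + 1)) : ℝ) / ‖g (t + 1)‖ ^ 2)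
    (hapos : ∀ t, 0 ≤ a (t + 1))
    (hmin : ∀ t, ∀ w ∈ Q,
      a (t + 1) * inner ℝ (g (t + 1)) (v (t + 1))
          + (1 / 2) * ‖v (t + 1) - v t‖ ^ 2
        ≤ a (t + 1) * inner ℝ (g (t + 1)) w + (1 / 2) * ‖w - v t‖ ^ 2) :
    ∀ w ∈ Q, ∀ T : ℕ, 1 ≤ T →
      ∑ t ∈ Finset.range T, a (t + 1) * (inner ℝ (g (t + 1)) (z (t + 1) - w) : ℝ)
        ≤ (1 / 2) * ‖v 0 - w‖ ^ 2 - (1 / 2) * ‖v T - w‖ ^ 2 := by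
  intro w hw T hT
  have key : ∀ t, a (t + 1) * (inner ℝ (g (t + 1)) (z (t + 1) - w) : ℝ)
      ≤ (1 / 2) * ‖v t - w‖ ^ 2 - (1 / 2) * ‖v (t + 1) - w‖ ^ 2 := by
    intro t
    have hgn : (0:ℝ) < ‖g (t+1)‖ ^ 2 := by
      have := norm_pos_iff.mpr (hgne t); positivity
    -- variational inequality for the minimizer
    have hVI : 0 ≤ a (t+1) * (inner ℝ (g (t+1)) (w - v (t+1)) : ℝ)
        + (inner ℝ (v (t+1) - v t) (w - v (t+1)) : ℝ) := by
      set X : ℝ := a (t+1) * (inner ℝ (g (t+1)) (w - v (t+1)) : ℝ)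
        + (inner ℝ (v (t+1) - v t) (w - v (t+1)) : ℝ) with hXdef
      set C : ℝ := ‖w - v (t+1)‖ ^ 2 with hCdef
      have hCnn : 0 ≤ C := by positivity
      have hlam : ∀ l : ℝ, 0 < l → l ≤ 1 → 0 ≤ l * X + l ^ 2 / 2 * C := by
        intro l hl0 hl1
        have hwl : v (t+1) + l • (w - v (t+1)) ∈ Q := by
          have h := hQconv (hv (t+1)) hw (by linarith : (0:ℝ) ≤ 1 - l) hl0.le
            (by ring)
          have heq : (1 - l) • v (t+1) + l • w
              = v (t+1) + l • (w - v (t+1)) := by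
            rw [smul_sub, sub_smul, one_smul]; abel
          rwa [heq] at h
        have h := hmin t _ hwl
        have hnorm : ‖(v (t+1) + l • (w - v (t+1))) - v t‖ ^ 2
            = ‖v (t+1) - v t‖ ^ 2
              + 2 * (l * (inner ℝ (v (t+1) - v t) (w - v (t+1)) : ℝ))
              + l ^ 2 * C := by
          have h1 : (v (t+1) + l • (w - v (t+1))) - v t
              = (v (t+1) - v t) + l • (w - v (t+1)) := by abel
          rw [h1, norm_add_sq_real, real_inner_smul_right, norm_smul]
          rw [hCdef]
          rw [mul_pow, Real.norm_eq_abs, sq_abs]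
        have hinner : (inner ℝ (g (t+1)) (v (t+1) + l • (w - v (t+1))) : ℝ)
            = (inner ℝ (g (t+1)) (v (t+1)) : ℝ)
              + l * (inner ℝ (g (t+1)) (w - v (t+1)) : ℝ) := by
          rw [inner_add_right, real_inner_smul_right]
        rw [hinner, hnorm] at h
        rw [hXdef]
        nlinarith [h]
      by_contra hneg
      push_neg at hneg
      set l : ℝ := min 1 (-X / (C + 1)) with hldef
      have hXpos : 0 < -X := by linarith
      have hl0 : 0 < l := lt_min one_pos (by positivity)
      have hl1 : l ≤ 1 := min_le_left _ _
      have h2 : l ≤ -X / (C + 1) := min_le_right _ _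
      have h3 : l * (C + 1) ≤ -X := (le_div_iff₀ (by positivity)).mp h2
      have h4 := hlam l hl0 hl1
      nlinarith [mul_le_mul_of_nonneg_left h3 hl0.le, sq_nonneg l]
    -- Cauchy-Schwarz step
    have hCS : a (t+1) * (inner ℝ (g (t+1)) (v t - v (t+1)) : ℝ)
        ≤ a (t+1) ^ 2 / 2 * ‖g (t+1)‖ ^ 2 + (1/2) * ‖v (t+1) - v t‖ ^ 2 := by
      have h1 : (inner ℝ (g (t+1)) (v t - v (t+1)) : ℝ)
          ≤ ‖g (t+1)‖ * ‖v t - v (t+1)‖ := real_inner_le_norm _ _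
      have h2 := mul_le_mul_of_nonneg_left h1 (hapos t)
      have h3 : ‖v (t+1) - v t‖ = ‖v t - v (t+1)‖ := norm_sub_rev _ _
      rw [h3]
      nlinarith [h2, sq_nonneg (a (t+1) * ‖g (t+1)‖ - ‖v t - v (t+1)‖)]
    -- the choice of a cancels
    have hcancel : a (t+1) * (inner ℝ (g (t+1)) (z (t+1) - v t) : ℝ)
        + a (t+1) ^ 2 / 2 * ‖g (t+1)‖ ^ 2 = 0 := by
      have hS : (inner ℝ (g (t+1)) (z (t+1) - v t) : ℝ)
          = -(inner ℝ (g (t+1)) (v t - z (t+1)) : ℝ) := by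
        rw [← inner_neg_right]; congr 1; abel
      rw [ha t, hS]
      field_simp
      ring
    -- combine
    have hsplit : (inner ℝ (g (t+1)) (z (t+1) - w) : ℝ)
        = (inner ℝ (g (t+1)) (z (t+1) - v t) : ℝ)
          + (inner ℝ (g (t+1)) (v t - v (t+1)) : ℝ)
          + (inner ℝ (g (t+1)) (v (t+1) - w) : ℝ) := by
      rw [← inner_add_right, ← inner_add_right]; congr 1; abel
    have hid : 2 * (inner ℝ (v (t+1) - v t) (w - v (t+1)) : ℝ)
        = ‖w - v t‖ ^ 2 - ‖w - v (t+1)‖ ^ 2 - ‖v (t+1) - v t‖ ^ 2 := by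
      have h1 : w - v t = (v (t+1) - v t) + (w - v (t+1)) := by abel
      rw [h1, norm_add_sq_real]; ring
    have hlast : (inner ℝ (g (t+1)) (v (t+1) - w) : ℝ)
        = -(inner ℝ (g (t+1)) (w - v (t+1)) : ℝ) := by
      rw [← inner_neg_right]; congr 1; abel
    have hn1 : ‖v t - w‖ = ‖w - v t‖ := norm_sub_rev _ _
    have hn2 : ‖v (t+1) - w‖ = ‖w - v (t+1)‖ := norm_sub_rev _ _
    have hlast' : a (t+1) * (inner ℝ (g (t+1)) (v (t+1) - w) : ℝ)
        = -(a (t+1) * (inner ℝ (g (t+1)) (w - v (t+1)) : ℝ)) := by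
      rw [hlast]; ring
    have e1 : a (t+1) * ((inner ℝ (g (t+1)) (z (t+1) - v t) : ℝ)
          + (inner ℝ (g (t+1)) (v t - v (t+1)) : ℝ)
          + (inner ℝ (g (t+1)) (v (t+1) - w) : ℝ))
        = a (t+1) * (inner ℝ (g (t+1)) (z (t+1) - v t) : ℝ)
          + a (t+1) * (inner ℝ (g (t+1)) (v t - v (t+1)) : ℝ)
          + a (t+1) * (inner ℝ (g (t+1)) (v (t+1) - w) : ℝ) := by ring
    rw [hsplit, hn1, hn2, e1, hlast']
    linarith [hVI, hCS, hcancel, hid]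
  -- telescoping sum
  have hsum : ∀ S : ℕ,
      ∑ t ∈ Finset.range S, a (t + 1) * (inner ℝ (g (t + 1)) (z (t + 1) - w) : ℝ)
        ≤ (1 / 2) * ‖v 0 - w‖ ^ 2 - (1 / 2) * ‖v S - w‖ ^ 2 := by
    intro S
    induction S with
    | zero => simp
    | succ n ih =>
      rw [Finset.sum_range_succ]
      have := key n
      linarith
  exact hsum T
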